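/- arXiv:2206.14600 — 2 statements merged into one kernel-verified Lean document; each statement's English description precedes it below -/
import Mathlib

section
/- The complex logarithm induces a topological group isomorphism log : ℂ^× → ℂ/(2πiℤ), whose inverse is the map induced by the exponential; moreover the pushforward under log of the Lebesgue measure on ℂ^× is the measure e^{2 Re(z')} dLeb_E(z') on E = ℂ/(2πiℤ), where Leb_E is the measure induced by Lebesgue measure on ℂ via the quotient. -/
open MeasureTheory Real

open Topology

/-- The cylinder `E = ℂ/(2πiℤ)`. -/
noncomputable abbrev CylE : Type := ℂ ⧸ AddSubgroup.zmultiples (2 * Real.pi * Complex.I)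

/-- The Haar measure `Leb_E` on `E = ℂ/(2πiℤ)` induced by Lebesgue measure on `ℂ`
via the quotient (using the fundamental domain `{z : Im z ∈ [-π, π)}`). -/
noncomputable def LebE : Measure CylE :=
  Measure.map (QuotientAddGroup.mk : ℂ → CylE)
    (volume.restrict {z : ℂ | z.im ∈ Set.Ico (-Real.pi) Real.pi})

noncomputable def expUnits (z : ℂ) : ℂˣ := Units.mk0 (Complex.exp z) (Complex.exp_ne_zero z)

lemma expUnits_resp (a b : ℂ)
    (h : QuotientAddGroup.leftRel (AddSubgroup.zmultiples (2 * Real.pi * Complex.I)) a b) :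
    expUnits a = expUnits b := by
  rw [QuotientAddGroup.leftRel_apply] at h
  obtain ⟨n, hn⟩ := h
  have : Complex.exp a = Complex.exp b := by
    rw [Complex.exp_eq_exp_iff_exists_int]
    refine ⟨-n, ?_⟩
    have : (n : ℂ) * (2 * Real.pi * Complex.I) = -a + b := by
      rw [← hn]; push_cast [zsmul_eq_mul]; ring
    push_cast
    linear_combination this
  exact Units.ext this

noncomputable def expQ : CylE → ℂˣ := fun q => Quotient.liftOn' q expUnits expUnits_resp

lemma expQ_mk (z : ℂ) : expQ (QuotientAddGroup.mk z) = expUnits z := rfl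

lemma continuous_expQ : Continuous expQ := by
  rw [QuotientAddGroup.isOpenQuotientMap_mk.isQuotientMap.continuous_iff]
  rw [Units.isEmbedding_val₀.continuous_iff]
  exact Complex.continuous_exp

lemma isOpenMap_expQ : IsOpenMap expQ := by
  intro U hU
  have hU' : U = QuotientAddGroup.mk '' ((QuotientAddGroup.mk : ℂ → CylE) ⁻¹' U) :=
    (Set.image_preimage_eq U (QuotientAddGroup.mk_surjective)).symm
  rw [hU', ← Set.image_comp]
  have : (expQ ∘ (QuotientAddGroup.mk : ℂ → CylE)) = expUnits := rfl
  rw [this]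
  rw [Units.isOpenEmbedding_val.isOpen_iff_image_isOpen]
  have : Units.val '' (expUnits '' ((QuotientAddGroup.mk : ℂ → CylE) ⁻¹' U))
      = Complex.exp '' ((QuotientAddGroup.mk : ℂ → CylE) ⁻¹' U) := by
    rw [← Set.image_comp]; rfl
  rw [this]
  exact Complex.isOpenMap_exp _ (hU.preimage continuous_quotient_mk')

lemma expQ_log (u : ℂˣ) : expQ (QuotientAddGroup.mk (Complex.log u)) = u := by
  rw [expQ_mk]
  exact Units.ext (Complex.exp_log u.ne_zero)

lemma mk_log_exp (z : ℂ) :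
    (QuotientAddGroup.mk (Complex.log (Complex.exp z)) : CylE) = QuotientAddGroup.mk z := by
  rw [QuotientAddGroup.eq_iff_sub_mem]
  have h : Complex.exp (Complex.log (Complex.exp z)) = Complex.exp z :=
    Complex.exp_log (Complex.exp_ne_zero z)
  rw [Complex.exp_eq_exp_iff_exists_int] at h
  obtain ⟨n, hn⟩ := h
  refine ⟨n, ?_⟩
  show n • (2 * (Real.pi:ℂ) * Complex.I) = _
  rw [zsmul_eq_mul]
  linear_combination -hn

noncomputable def expQEquiv : CylE ≃ ℂˣ where
  toFun := expQ
  invFun := fun u => QuotientAddGroup.mk (Complex.log u)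
  left_inv := by
    intro q
    induction q using QuotientAddGroup.induction_on with
    | H z => rw [expQ_mk]; exact mk_log_exp z
  right_inv := expQ_log

noncomputable def expQHomeo : CylE ≃ₜ ℂˣ :=
  Equiv.toHomeomorphOfContinuousOpen expQEquiv continuous_expQ isOpenMap_expQ

noncomputable def fder (z : ℂ) : ℂ →L[ℝ] ℂ :=
  (ContinuousLinearMap.smulRight (1 : ℂ →L[ℂ] ℂ) (Complex.exp z)).restrictScalars ℝ

lemma det_fder (z : ℂ) : (fder z).det = Complex.normSq (Complex.exp z) := by
  show LinearMap.det _ = _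
  rw [← LinearMap.det_toMatrix Complex.basisOneI, Matrix.det_fin_two]
  simp [fder, LinearMap.toMatrix_apply, Complex.normSq_apply]

def stripS : Set ℂ := {z | z.im ∈ Set.Ioc (-Real.pi) Real.pi}
def stripF : Set ℂ := {z | z.im ∈ Set.Ico (-Real.pi) Real.pi}

lemma measurableSet_stripS : MeasurableSet stripS :=
  Complex.measurable_im measurableSet_Ioc

lemma exp_image_stripS : Complex.exp '' stripS = {(0 : ℂ)}ᶜ := by
  ext w
  simp only [Set.mem_image, Set.mem_compl_iff, Set.mem_singleton_iff]
  constructor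
  · rintro ⟨z, _, rfl⟩; exact Complex.exp_ne_zero z
  · intro hw
    exact ⟨Complex.log w, ⟨by simpa [Complex.log_im] using Complex.neg_pi_lt_arg w,
      by simpa [Complex.log_im] using Complex.arg_le_pi w⟩, Complex.exp_log hw⟩

lemma injOn_exp_stripS : Set.InjOn Complex.exp stripS := by
  intro a ha b hb hab
  rw [Complex.exp_eq_exp_iff_exists_int] at hab
  obtain ⟨n, hn⟩ := hab
  have him : a.im = b.im + n * (2 * Real.pi) := by
    have := congrArg Complex.im hn
    simpa [Complex.add_im, Complex.mul_im, Complex.mul_re] using this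
  have hn0 : n = 0 := by
    obtain ⟨ha1, ha2⟩ := ha; obtain ⟨hb1, hb2⟩ := hb
    have hpi := Real.pi_pos
    have h1 : (n : ℝ) * (2 * Real.pi) < 2 * Real.pi := by nlinarith
    have h2 : -(2 * Real.pi) < (n : ℝ) * (2 * Real.pi) := by nlinarith
    have hlt : (-1 : ℝ) < (n : ℝ) := by nlinarith
    have hgt : (n : ℝ) < 1 := by nlinarith
    have h1' : (-1 : ℤ) < n := by exact_mod_cast hlt
    have h2' : (n : ℤ) < 1 := by exact_mod_cast hgt
    omega
  rw [hn0] at hn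
  simpa using hn

lemma map_exp_density :
    Measure.map Complex.exp
        ((volume.restrict stripS).withDensity fun z => ENNReal.ofReal |(fder z).det|)
      = volume.restrict {(0 : ℂ)}ᶜ := by
  have h := MeasureTheory.map_withDensity_abs_det_fderiv_eq_addHaar
    (volume : Measure ℂ) measurableSet_stripS.nullMeasurableSet
    (fun z _ => ((Complex.hasDerivAt_exp z).hasFDerivAt.restrictScalars ℝ).hasFDerivWithinAt)
    injOn_exp_stripS
  rw [exp_image_stripS] at h
  exact h

open scoped ENNReal

lemma map_withDensity_comp {α β : Type*} [MeasurableSpace α] [MeasurableSpace β]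
    {f : α → β} (hf : Measurable f) (μ : Measure α) {g : β → ℝ≥0∞} (hg : Measurable g) :
    Measure.map f (μ.withDensity (g ∘ f)) = (Measure.map f μ).withDensity g := by
  ext t ht
  rw [Measure.map_apply hf ht, withDensity_apply _ (hf ht), withDensity_apply _ ht,
    setLIntegral_map ht hg hf]
  rfl

lemma volume_im_line (c : ℝ) : volume {z : ℂ | z.im = c} = 0 := by
  have h : {z : ℂ | z.im = c} = Complex.measurableEquivRealProd ⁻¹' (Set.univ ×ˢ {c}) := by
    ext z; simp [Complex.measurableEquivRealProd, eq_comm]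
  rw [h, Complex.volume_preserving_equiv_real_prod.measure_preimage
    ((MeasurableSet.univ.prod (measurableSet_singleton c)).nullMeasurableSet)]
  rw [Measure.volume_eq_prod, Measure.prod_prod]
  simp

lemma stripS_ae_stripF : stripS =ᵐ[(volume : Measure ℂ)] stripF := by
  rw [MeasureTheory.ae_eq_set]
  constructor
  · refine measure_mono_null (fun z hz => ?_) (volume_im_line Real.pi)
    obtain ⟨⟨h1, h2⟩, h3⟩ := hz
    simp only [stripF, Set.mem_setOf_eq, Set.mem_Ico, not_and, not_lt] at h3
    exact le_antisymm h2 (h3 h1.le)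
  · refine measure_mono_null (fun z hz => ?_) (volume_im_line (-Real.pi))
    obtain ⟨⟨h1, h2⟩, h3⟩ := hz
    simp only [stripS, Set.mem_setOf_eq, Set.mem_Ioc, not_and, not_le] at h3
    by_contra hne
    exact absurd (h3 (lt_of_le_of_ne h1 (Ne.symm hne))) (not_lt.mpr h2.le)

lemma re_resp (a b : ℂ)
    (h : QuotientAddGroup.leftRel (AddSubgroup.zmultiples (2 * Real.pi * Complex.I)) a b) :
    a.re = b.re := by
  rw [QuotientAddGroup.leftRel_apply] at h
  obtain ⟨n, hn⟩ := h
  have h0 := congrArg Complex.re hn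
  have h2 : (n • (2 * (Real.pi : ℂ) * Complex.I)).re = 0 := by
    rw [zsmul_eq_mul]
    simp [Complex.mul_re, Complex.mul_im]
  simp only [Complex.add_re, Complex.neg_re] at h0
  rw [h2] at h0
  linarith

noncomputable def ReE : CylE → ℝ := fun q => Quotient.liftOn' q Complex.re re_resp

lemma ReE_mk (z : ℂ) : ReE (QuotientAddGroup.mk z) = z.re := rfl

lemma measurable_ReE : Measurable ReE :=
  QuotientAddGroup.measurable_from_quotient.mpr Complex.measurable_re

lemma range_val : Set.range (Units.val : ℂˣ → ℂ) = {(0 : ℂ)}ᶜ := by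
  ext z
  simp only [Set.mem_range, Set.mem_compl_iff, Set.mem_singleton_iff]
  exact ⟨fun ⟨u, hu⟩ => hu ▸ u.ne_zero, fun h => ⟨Units.mk0 z h, rfl⟩⟩

/-- The complex logarithm induces a topological group isomorphism
`log : ℂ^× → ℂ/(2πiℤ)` inverse to the map induced by `exp`, and the pushforward of
the Lebesgue measure of `ℂ^×` under `log` is `e^{2 Re z'} dLeb_E(z')`. -/
theorem log_iso_and_pushforward :
    ∃ (e : ℂˣ ≃ₜ CylE) (ReE : CylE → ℝ),
      (∀ u v : ℂˣ, e (u * v) = e u + e v) ∧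
      (∀ z : ℂ, e (Units.mk0 (Complex.exp z) (Complex.exp_ne_zero z))
          = QuotientAddGroup.mk z) ∧
      (∀ z : ℂ, ReE (QuotientAddGroup.mk z) = z.re) ∧
      Measure.map (fun u : ℂˣ => e u)
          (Measure.comap (fun u : ℂˣ => (u : ℂ)) volume)
        = LebE.withDensity fun z' => ENNReal.ofReal (Real.exp (2 * ReE z')) := by
  refine ⟨expQHomeo.symm, ReE, ?_, ?_, ReE_mk, ?_⟩
  · -- group law
    intro u v
    apply expQEquiv.injective
    have h1 : ∀ w : ℂˣ, expQEquiv (expQHomeo.symm w) = w := fun w => expQ_log w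
    rw [h1]
    symm
    show expQ (expQHomeo.symm u + expQHomeo.symm v) = u * v
    have : expQHomeo.symm u + expQHomeo.symm v
        = QuotientAddGroup.mk (Complex.log u + Complex.log v) := rfl
    rw [this, expQ_mk]
    refine Units.ext ?_
    show Complex.exp _ = _
    rw [Complex.exp_add, Complex.exp_log u.ne_zero, Complex.exp_log v.ne_zero]
    rfl
  · -- exp property
    intro z
    have : (Units.mk0 (Complex.exp z) (Complex.exp_ne_zero z)) = expQHomeo (QuotientAddGroup.mk z) := rfl
    rw [this, Homeomorph.symm_apply_apply]
  · -- measure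
    have hmk : Measurable (QuotientAddGroup.mk : ℂ → CylE) := QuotientAddGroup.measurable_coe
    have hmklog : Measurable ((QuotientAddGroup.mk : ℂ → CylE) ∘ Complex.log) :=
      hmk.comp Complex.measurable_log
    have hvalME : MeasurableEmbedding (Units.val : ℂˣ → ℂ) := by
      refine ⟨Units.val_injective, fun s hs => ⟨s, hs, rfl⟩, ?_⟩
      rintro s ⟨t, ht, rfl⟩
      rw [Set.image_preimage_eq_inter_range, range_val]
      exact ht.inter (measurableSet_singleton 0).compl
    have hg : Measurable (fun q => ENNReal.ofReal (Real.exp (2 * ReE q))) :=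
      ENNReal.measurable_ofReal.comp (Real.measurable_exp.comp (measurable_ReE.const_mul 2))
    have hfun : (fun u : ℂˣ => (expQHomeo.symm u : CylE))
        = ((QuotientAddGroup.mk : ℂ → CylE) ∘ Complex.log) ∘ (Units.val : ℂˣ → ℂ) := rfl
    set ν : Measure ℂ :=
      (volume.restrict stripS).withDensity fun z => ENNReal.ofReal |(fder z).det| with hν
    have hdens : (fun z : ℂ => ENNReal.ofReal |(fder z).det|)
        = (fun q => ENNReal.ofReal (Real.exp (2 * ReE q))) ∘ (QuotientAddGroup.mk : ℂ → CylE) := by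
      funext z
      show _ = ENNReal.ofReal (Real.exp (2 * z.re))
      rw [det_fder, abs_of_nonneg (Complex.normSq_nonneg _), Complex.normSq_eq_norm_sq,
        Complex.norm_exp, sq, ← Real.exp_add, two_mul]
    calc Measure.map (fun u : ℂˣ => (expQHomeo.symm u : CylE))
          (Measure.comap (fun u : ℂˣ => (u : ℂ)) volume)
        = Measure.map (((QuotientAddGroup.mk : ℂ → CylE) ∘ Complex.log) ∘ (Units.val : ℂˣ → ℂ))
          (Measure.comap (Units.val : ℂˣ → ℂ) volume) := by rw [hfun]
      _ = Measure.map ((QuotientAddGroup.mk : ℂ → CylE) ∘ Complex.log)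
          (Measure.map (Units.val : ℂˣ → ℂ) (Measure.comap (Units.val : ℂˣ → ℂ) volume)) :=
          (Measure.map_map hmklog hvalME.measurable).symm
      _ = Measure.map ((QuotientAddGroup.mk : ℂ → CylE) ∘ Complex.log)
          (volume.restrict {(0:ℂ)}ᶜ) := by
          rw [show (Measure.comap (Units.val : ℂˣ → ℂ) volume).map (Units.val : ℂˣ → ℂ)
              = volume.restrict (Set.range (Units.val : ℂˣ → ℂ)) from hvalME.map_comap volume,
            range_val]
      _ = Measure.map ((QuotientAddGroup.mk : ℂ → CylE) ∘ Complex.log)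
          (Measure.map Complex.exp ν) := by rw [map_exp_density]
      _ = Measure.map (((QuotientAddGroup.mk : ℂ → CylE) ∘ Complex.log) ∘ Complex.exp) ν :=
          Measure.map_map hmklog Complex.measurable_exp
      _ = Measure.map (QuotientAddGroup.mk : ℂ → CylE) ν := by
          refine Measure.map_congr ?_
          have h1 : ∀ᵐ z ∂(volume.restrict stripS), z ∈ stripS :=
            ae_restrict_mem measurableSet_stripS
          have h2 : ∀ᵐ z ∂ν, z ∈ stripS :=
            (withDensity_absolutelyContinuous _ _) h1
          filter_upwards [h2] with z hz
          show QuotientAddGroup.mk (Complex.log (Complex.exp z)) = _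
          rw [Complex.log_exp hz.1 hz.2]
      _ = (Measure.map (QuotientAddGroup.mk : ℂ → CylE) (volume.restrict stripS)).withDensity
          (fun q => ENNReal.ofReal (Real.exp (2 * ReE q))) := by
          rw [hν, hdens, map_withDensity_comp hmk _ hg]
      _ = LebE.withDensity (fun q => ENNReal.ofReal (Real.exp (2 * ReE q))) := by
          rw [show volume.restrict stripS = volume.restrict stripF from
            Measure.restrict_congr_set stripS_ae_stripF]
          rfl
end

section
/- Let p ∈ ℂ with |p| ≤ 2N. Then the area of the region C̃_{p,N} = {z ∈ ℂ : |z| ≤ |p+z| ≤ N} satisfies (π/2)N² − |p|N ≤ Area(C̃_{p,N}) ≤ (π/2)N². -/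
open Real MeasureTheory

/-- For `p ∈ ℂ` nonzero with `|p| ≤ 2N`, the area of
`C̃_{p,N} = {z ∈ ℂ : |z| ≤ |p+z| ≤ N}` satisfies
`(π/2)N² − |p|N ≤ Area(C̃_{p,N}) ≤ (π/2)N²`. -/
theorem area_CpN (p : ℂ) (hp0 : p ≠ 0) (N : ℝ) (hp : ‖p‖ ≤ 2 * N) :
    ENNReal.ofReal (π / 2 * N ^ 2 - ‖p‖ * N)
        ≤ volume {z : ℂ | ‖z‖ ≤ ‖p + z‖ ∧ ‖p + z‖ ≤ N} ∧
      volume {z : ℂ | ‖z‖ ≤ ‖p + z‖ ∧ ‖p + z‖ ≤ N}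
        ≤ ENNReal.ofReal (π / 2 * N ^ 2) := by
  have hm : 0 < ‖p‖ := norm_pos_iff.mpr hp0
  have hN : 0 < N := by linarith
  set m := ‖p‖ with hm_def
  set a := m / 2 with ha_def
  have ha0 : 0 ≤ a := by positivity
  have haN : a ≤ N := by simp only [ha_def]; linarith
  set D := Metric.closedBall (0 : ℂ) N with hD_def
  have hDmeas : MeasurableSet D := measurableSet_closedBall
  set Hp : Set ℂ := {z : ℂ | 0 ≤ z.re} with hHp_def
  set Ha : Set ℂ := {z : ℂ | a ≤ z.re} with hHa_def
  have hHpmeas : MeasurableSet Hp :=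
    (isClosed_le continuous_const Complex.continuous_re).measurableSet
  have hHameas : MeasurableSet Ha :=
    (isClosed_le continuous_const Complex.continuous_re).measurableSet
  -- volume of the full disc
  have hvolD : volume D = ENNReal.ofReal (π * N ^ 2) := by
    rw [hD_def, Complex.volume_closedBall, ← ENNReal.ofReal_pow hN.le,
      ← ENNReal.ofReal_coe_nnreal, ← ENNReal.ofReal_mul (by positivity)]
    norm_num [mul_comm]
  -- the vertical line has measure zero
  have hline : volume {z : ℂ | z.re = 0} = 0 := by
    have h1 : {z : ℂ | z.re = 0} =
        Complex.measurableEquivRealProd ⁻¹' ({(0 : ℝ)} ×ˢ (Set.univ : Set ℝ)) := by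
      ext z
      simp [Complex.measurableEquivRealProd_apply, Set.mem_prod, eq_comm]
    rw [h1, Complex.volume_preserving_equiv_real_prod.measure_preimage
      ((measurableSet_singleton _).prod MeasurableSet.univ).nullMeasurableSet]
    rw [Measure.volume_eq_prod, Measure.prod_prod]
    simp
  -- reflection: volume of the left half-disc equals volume of the right half-disc
  have hrefl : volume ({z : ℂ | z.re ≤ 0} ∩ D) = volume (Hp ∩ D) := by
    have hmp := (LinearIsometryEquiv.neg ℝ (E := ℂ)).measurePreserving
    have hpre : (LinearIsometryEquiv.neg ℝ (E := ℂ)) ⁻¹' ({z : ℂ | z.re ≤ 0} ∩ D)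
        = Hp ∩ D := by
      ext z
      simp [hD_def, Metric.mem_closedBall, Complex.dist_eq, hHp_def, neg_le, Set.mem_inter_iff]
    rw [← hpre, hmp.measure_preimage
      (((isClosed_le Complex.continuous_re continuous_const).measurableSet.inter
        hDmeas).nullMeasurableSet)]
  -- the open left half-disc has the same volume
  have hlt : volume ({z : ℂ | z.re < 0} ∩ D) = volume (Hp ∩ D) := by
    rw [← hrefl]
    apply le_antisymm
    · exact measure_mono (Set.inter_subset_inter_left _ (fun z (hz : z.re < 0) => (le_of_lt hz : z.re ≤ 0)))
    · calc volume ({z : ℂ | z.re ≤ 0} ∩ D)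
          ≤ volume (({z : ℂ | z.re < 0} ∩ D) ∪ {z : ℂ | z.re = 0}) := by
            apply measure_mono
            rintro z ⟨(hz1 : z.re ≤ 0), hz2⟩
            rcases lt_or_eq_of_le hz1 with h | h
            · exact Or.inl ⟨h, hz2⟩
            · exact Or.inr h
        _ ≤ volume ({z : ℂ | z.re < 0} ∩ D) + volume {z : ℂ | z.re = 0} :=
            measure_union_le _ _
        _ = volume ({z : ℂ | z.re < 0} ∩ D) := by rw [hline, add_zero]
  -- twice the right half disc is the whole disc
  have hhalf : volume (Hp ∩ D) + volume (Hp ∩ D) = ENNReal.ofReal (π * N ^ 2) := by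
    have hdisj : Disjoint (Hp ∩ D) ({z : ℂ | z.re < 0} ∩ D) := by
      apply Set.disjoint_left.mpr
      rintro z ⟨(hz1 : 0 ≤ z.re), _⟩ ⟨(hz2 : z.re < 0), _⟩
      exact absurd hz1 (not_le.mpr hz2)
    have hunion : (Hp ∩ D) ∪ ({z : ℂ | z.re < 0} ∩ D) = D := by
      ext z
      constructor
      · rintro (⟨_, h⟩ | ⟨_, h⟩) <;> exact h
      · intro h
        rcases le_or_gt 0 z.re with h' | h'
        · exact Or.inl ⟨h', h⟩
        · exact Or.inr ⟨h', h⟩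
    have := measure_union (μ := volume) hdisj
      ((isOpen_lt Complex.continuous_re continuous_const).measurableSet.inter hDmeas)
    rw [hunion] at this
    rw [← hvolD, this, hlt]
  -- the target set has the same volume as `Ha ∩ D`
  have hc_mem : (starRingEnd ℂ) p / (m : ℂ) ∈ Submonoid.unitSphere ℂ := by
    rw [Submonoid.unitSphere, Submonoid.mem_mk, Subsemigroup.mem_mk,
      mem_sphere_zero_iff_norm]
    simp only [norm_div, Complex.norm_conj, Complex.norm_real, Real.norm_eq_abs,
      abs_of_pos hm]
    field_simp
    exact hm_def.symm
  set c : Circle := ⟨(starRingEnd ℂ) p / (m : ℂ), hc_mem⟩ with hc_def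
  set f : ℂ → ℂ := fun z => rotation c (z + p) with hf_def
  have hmp : MeasurePreserving f volume volume :=
    (rotation c).measurePreserving.comp (measurePreserving_add_right volume p)
  have hset : {z : ℂ | ‖z‖ ≤ ‖p + z‖ ∧ ‖p + z‖ ≤ N}
      = f ⁻¹' (Ha ∩ D) := by
    ext z
    have hfz : f z = (starRingEnd ℂ) p * (z + p) / (m : ℂ) := by
      simp only [hf_def, rotation_apply]
      ring
    have habs : ‖f z‖ = ‖p + z‖ := by
      rw [hfz, norm_div, norm_mul, Complex.norm_conj, Complex.norm_real, Real.norm_eq_abs, abs_of_pos hm,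
        ← hm_def]
      rw [mul_comm, mul_div_assoc, div_self hm.ne', mul_one, add_comm]
    have hre : (f z).re = (p.re * (z.re + p.re) + p.im * (z.im + p.im)) / m := by
      rw [hfz, Complex.div_ofReal_re]
      congr 1
      simp only [Complex.mul_re, Complex.conj_re, Complex.conj_im, Complex.add_re,
        Complex.add_im]
      ring
    have hm2 : p.re ^ 2 + p.im ^ 2 = m ^ 2 := by
      rw [hm_def, Complex.sq_norm, Complex.normSq_apply]; ring
    constructor
    · rintro ⟨h1, h2⟩
      refine ⟨?_, ?_⟩
      · -- a ≤ (f z).re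
        show a ≤ (f z).re
        rw [hre, le_div_iff₀ hm, ha_def, div_mul_eq_mul_div]
        have h1' : (‖z‖) ^ 2 ≤ (‖p + z‖) ^ 2 := by
          exact pow_le_pow_left₀ (norm_nonneg z) h1 2
        rw [Complex.sq_norm, Complex.sq_norm, Complex.normSq_apply, Complex.normSq_apply,
          Complex.add_re, Complex.add_im] at h1'
        rw [div_le_iff₀ (by norm_num : (0:ℝ) < 2)]
        nlinarith [hm2]
      · show f z ∈ D
        rw [hD_def, Metric.mem_closedBall, Complex.dist_eq, sub_zero, habs]
        exact h2
    · rintro ⟨h1, h2⟩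
      have h1' : a ≤ (f z).re := h1
      have h2' : ‖p + z‖ ≤ N := by
        have := h2
        rw [hD_def, Metric.mem_closedBall, Complex.dist_eq, sub_zero, habs] at this
        exact this
      refine ⟨?_, h2'⟩
      rw [hre, le_div_iff₀ hm, ha_def, div_mul_eq_mul_div, div_le_iff₀
        (by norm_num : (0:ℝ) < 2)] at h1'
      have key : (‖z‖) ^ 2 ≤ (‖p + z‖) ^ 2 := by
        rw [Complex.sq_norm, Complex.sq_norm, Complex.normSq_apply, Complex.normSq_apply,
          Complex.add_re, Complex.add_im]
        nlinarith [hm2]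
      exact (pow_le_pow_iff_left₀ (norm_nonneg z) (norm_nonneg (p + z))
        two_ne_zero).mp key
  have hvolS : volume {z : ℂ | ‖z‖ ≤ ‖p + z‖ ∧ ‖p + z‖ ≤ N}
      = volume (Ha ∩ D) := by
    rw [hset, hmp.measure_preimage (hHameas.inter hDmeas).nullMeasurableSet]
  -- strip bound
  have hstrip : volume {z : ℂ | z.re ∈ Set.Icc 0 a ∧ z.im ∈ Set.Icc (-N) N}
      ≤ ENNReal.ofReal (m * N) := by
    have h1 : {z : ℂ | z.re ∈ Set.Icc 0 a ∧ z.im ∈ Set.Icc (-N) N}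
        = Complex.measurableEquivRealProd ⁻¹' (Set.Icc 0 a ×ˢ Set.Icc (-N) N) := by
      ext z
      simp only [Set.mem_setOf_eq, Set.mem_preimage, Complex.measurableEquivRealProd_apply,
        Set.mem_prod, Set.mem_Icc]
    rw [h1, Complex.volume_preserving_equiv_real_prod.measure_preimage
      (measurableSet_Icc.prod measurableSet_Icc).nullMeasurableSet,
      Measure.volume_eq_prod, Measure.prod_prod, Real.volume_Icc, Real.volume_Icc,
      ← ENNReal.ofReal_mul (by linarith)]
    exact ENNReal.ofReal_le_ofReal (le_of_eq (by rw [ha_def]; ring))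
  -- half-disc covered by slab and strip
  have hcover : volume (Hp ∩ D) ≤ volume (Ha ∩ D) + ENNReal.ofReal (m * N) := by
    calc volume (Hp ∩ D)
        ≤ volume ((Ha ∩ D) ∪ {z : ℂ | z.re ∈ Set.Icc 0 a ∧ z.im ∈ Set.Icc (-N) N}) := by
          apply measure_mono
          rintro z ⟨hz1, hz2⟩
          rcases le_or_gt a z.re with h | h
          · exact Or.inl ⟨h, hz2⟩
          · refine Or.inr ⟨⟨hz1, h.le⟩, ?_⟩
            have hzN : ‖z‖ ≤ N := by
              rwa [hD_def, Metric.mem_closedBall, Complex.dist_eq, sub_zero] at hz2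
            have := (Complex.abs_im_le_norm z).trans hzN
            rw [abs_le] at this
            exact ⟨this.1, this.2⟩
      _ ≤ volume (Ha ∩ D) + volume {z : ℂ | z.re ∈ Set.Icc 0 a ∧ z.im ∈ Set.Icc (-N) N} :=
          measure_union_le _ _
      _ ≤ volume (Ha ∩ D) + ENNReal.ofReal (m * N) := by gcongr
  have hmono : volume (Ha ∩ D) ≤ volume (Hp ∩ D) := by
    apply measure_mono
    exact Set.inter_subset_inter_left _ (fun z (hz : a ≤ z.re) => (le_trans ha0 hz : 0 ≤ z.re))
  -- value of half disc as division
  have hval : volume (Hp ∩ D) = ENNReal.ofReal (π / 2 * N ^ 2) := by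
    have h2 : (2 : ENNReal) * volume (Hp ∩ D) = ENNReal.ofReal (π * N ^ 2) := by
      rw [two_mul]; exact hhalf
    have : volume (Hp ∩ D) = ENNReal.ofReal (π * N ^ 2) / 2 :=
      (ENNReal.eq_div_iff (by norm_num) (by norm_num)).mpr h2
    rw [this]
    symm
    rw [ENNReal.eq_div_iff (by norm_num) (by norm_num),
      show (2 : ENNReal) = ENNReal.ofReal 2 by norm_num,
      ← ENNReal.ofReal_mul (by norm_num)]
    congr 1
    ring
  constructor
  · -- lower bound
    rw [hvolS]
    have hsub : ENNReal.ofReal (π / 2 * N ^ 2 - m * N)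
        = ENNReal.ofReal (π / 2 * N ^ 2) - ENNReal.ofReal (m * N) :=
      ENNReal.ofReal_sub _ (by positivity)
    rw [hsub, tsub_le_iff_right, ← hval]
    exact hcover
  · rw [hvolS, ← hval]
    exact hmono
end
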